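/- The Golden–Thompson-type inequality fails for the Mittag-Leffler function at α = 1/2 in the scalar case: E_{1/2}(1+1) > E_{1/2}(1) · E_{1/2}(1). -/
import Mathlib


open Real MeasureTheory

noncomputable def erfc (x : ℝ) : ℝ :=
  (2 / Real.sqrt π) * ∫ u in Set.Ioi x, Real.exp (-u ^ 2)

lemma integrable_g : MeasureTheory.Integrable (fun u : ℝ => Real.exp (-u ^ 2)) := by
  have := integrable_exp_neg_mul_sq (by norm_num : (0:ℝ) < 1)
  simpa using this

lemma integral_g : ∫ u : ℝ, Real.exp (-u ^ 2) = Real.sqrt π := by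
  have := integral_gaussian 1
  simpa using this

lemma erfc_neg_one_le : erfc (-1) ≤ 2 := by
  unfold erfc
  have h1 : (∫ u in Set.Ioi (-1:ℝ), Real.exp (-u ^ 2)) ≤ Real.sqrt π := by
    rw [← integral_g]
    exact MeasureTheory.setIntegral_le_integral integrable_g
      (Filter.Eventually.of_forall fun x => (Real.exp_pos _).le)
  have hπ : (0:ℝ) < Real.sqrt π := Real.sqrt_pos.2 Real.pi_pos
  calc (2 / Real.sqrt π) * ∫ u in Set.Ioi (-1:ℝ), Real.exp (-u ^ 2)
      ≤ (2 / Real.sqrt π) * Real.sqrt π := by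
        exact mul_le_mul_of_nonneg_left h1 (by positivity)
    _ = 2 := by field_simp

lemma erfc_neg_two_gt : erfc (-(2:ℝ)) > 1 := by
  unfold erfc
  have hsplit : (Set.Ioc (-2:ℝ) 0) ∪ Set.Ioi (0:ℝ) = Set.Ioi (-2:ℝ) :=
    Set.Ioc_union_Ioi_eq_Ioi (by norm_num)
  have hIoi0 : (∫ u in Set.Ioi (0:ℝ), Real.exp (-u ^ 2)) = Real.sqrt π / 2 := by
    have := integral_gaussian_Ioi 1
    simpa using this
  have hint : (∫ u in Set.Ioi (-2:ℝ), Real.exp (-u ^ 2))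
      = (∫ u in Set.Ioc (-2:ℝ) 0, Real.exp (-u ^ 2))
        + ∫ u in Set.Ioi (0:ℝ), Real.exp (-u ^ 2) := by
    rw [← hsplit]
    exact MeasureTheory.setIntegral_union (Set.Ioc_disjoint_Ioi le_rfl)
      measurableSet_Ioi integrable_g.integrableOn integrable_g.integrableOn
  have hpos : (0:ℝ) < ∫ u in Set.Ioc (-2:ℝ) 0, Real.exp (-u ^ 2) := by
    rw [← intervalIntegral.integral_of_le (by norm_num : (-2:ℝ) ≤ 0)]
    apply intervalIntegral.intervalIntegral_pos_of_pos_on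
    · exact integrable_g.intervalIntegrable
    · intro x _; exact Real.exp_pos _
    · norm_num
  have hπ : (0:ℝ) < Real.sqrt π := Real.sqrt_pos.2 Real.pi_pos
  have h2 : Real.sqrt π / 2 < ∫ u in Set.Ioi (-2:ℝ), Real.exp (-u ^ 2) := by
    rw [hint, hIoi0]; linarith
  have : (2 / Real.sqrt π) * (Real.sqrt π / 2)
      < (2 / Real.sqrt π) * ∫ u in Set.Ioi (-2:ℝ), Real.exp (-u ^ 2) :=
    mul_lt_mul_of_pos_left h2 (by positivity)
  calc (1:ℝ) = (2 / Real.sqrt π) * (Real.sqrt π / 2) := by field_simp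
    _ < _ := this

lemma erfc_nonneg (x : ℝ) : 0 ≤ erfc x := by
  unfold erfc
  have : 0 ≤ ∫ u in Set.Ioi x, Real.exp (-u ^ 2) :=
    MeasureTheory.setIntegral_nonneg measurableSet_Ioi fun u _ => (Real.exp_pos _).le
  have hπ : (0:ℝ) < Real.sqrt π := Real.sqrt_pos.2 Real.pi_pos
  positivity

theorem goldenThompson_fails_for_mittagLeffler_half :
    Real.exp ((1 + 1 : ℝ) ^ 2) * erfc (-(1 + 1)) >
      (Real.exp (1 ^ 2) * erfc (-1)) * (Real.exp (1 ^ 2) * erfc (-1)) := by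
  have h2 : erfc (-(1 + 1 : ℝ)) > 1 := by rw [show -(1+1:ℝ) = -2 by norm_num]; exact erfc_neg_two_gt
  have h1 : erfc (-1 : ℝ) ≤ 2 := erfc_neg_one_le
  have h0 : (0:ℝ) ≤ erfc (-1) := erfc_nonneg _
  have he1 : (2.7182818283:ℝ) < Real.exp 1 := Real.exp_one_gt_d9
  have hRHS : (Real.exp (1 ^ 2) * erfc (-1)) * (Real.exp (1 ^ 2) * erfc (-1))
      ≤ Real.exp 2 * 4 := by
    have : Real.exp (1^2) * erfc (-1) ≤ Real.exp 1 * 2 := by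
      rw [one_pow]
      exact mul_le_mul_of_nonneg_left h1 (Real.exp_pos _).le
    have hpos : (0:ℝ) ≤ Real.exp (1^2) * erfc (-1) := by positivity
    calc (Real.exp (1 ^ 2) * erfc (-1)) * (Real.exp (1 ^ 2) * erfc (-1))
        ≤ (Real.exp 1 * 2) * (Real.exp 1 * 2) := mul_le_mul this this hpos (by positivity)
      _ = Real.exp 2 * 4 := by rw [show Real.exp 1 * 2 * (Real.exp 1 * 2) = Real.exp 1 * Real.exp 1 * 4 by ring, ← Real.exp_add]; norm_num
  have hLHS : Real.exp 2 * 4 < Real.exp ((1 + 1 : ℝ) ^ 2) * erfc (-(1 + 1)) := by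
    have h4 : ((1 + 1 : ℝ) ^ 2) = 4 := by norm_num
    rw [h4]
    have hexp24 : Real.exp 2 * 4 < Real.exp 4 := by
      have : Real.exp 4 = Real.exp 2 * Real.exp 2 := by rw [← Real.exp_add]; norm_num
      rw [this]
      have h2e : (4:ℝ) < Real.exp 2 := by
        have : Real.exp 2 = Real.exp 1 * Real.exp 1 := by rw [← Real.exp_add]; norm_num
        nlinarith [he1]
      nlinarith [Real.exp_pos 2]
    calc Real.exp 2 * 4 < Real.exp 4 := hexp24
      _ = Real.exp 4 * 1 := by ring
      _ < Real.exp 4 * erfc (-(1 + 1)) := by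
          exact mul_lt_mul_of_pos_left h2 (Real.exp_pos _)
  linarith
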